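/- The functional $W^g$ is a distance on $\mathcal{M}(\mathbb{R}^d)$: it is nonnegative, symmetric, vanishes exactly on pairs of equal measures, and satisfies the triangle inequality $W^g(\mu,\rho) \le W^g(\mu,\nu) + W^g(\nu,\rho)$ for all $\mu,\nu,\rho \in \mathcal{M}(\mathbb{R}^d)$. -/

import Mathlib

open MeasureTheory Set Metric Filter

noncomputable section

/-- Euclidean space `ℝ^n`. -/
abbrev Euc (n : ℕ) : Type := EuclideanSpace ℝ (Fin n)

/-- The tangent bundle `Tℝ^n ≅ ℝ^n × ℝ^n`, with projection `Prod.fst`. -/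
abbrev TEuc (n : ℕ) : Type := Euc n × Euc n

/-- The support of a measure: points all of whose neighborhoods have positive measure. -/
def msupp {X : Type} [TopologicalSpace X] [MeasurableSpace X] (μ : Measure X) : Set X :=
  {x | ∀ U ∈ nhds x, μ U ≠ 0}

/-- The total mass `|μ|` of a measure, as a real number. -/
def mass {X : Type} [MeasurableSpace X] (μ : Measure X) : ℝ := (μ Set.univ).toReal

/-- `μ ∈ 𝓜`: a positive Borel measure with finite mass and bounded support. -/
def GoodMeasure {X : Type} [PseudoMetricSpace X] [MeasurableSpace X] (μ : Measure X) : Prop :=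
  μ Set.univ ≠ ⊤ ∧ Bornology.IsBounded (msupp μ)

/-- The total variation norm `|μ - ν|` of the difference of two (finite) positive measures. -/
def tv {X : Type} [MeasurableSpace X] (μ ν : Measure X) : ℝ :=
  mass μ + mass ν - 2 * mass (μ ⊓ ν)

/-- Transference plans between two measures: measures on the product with the
given marginals. -/
def plans {X Y : Type} [MeasurableSpace X] [MeasurableSpace Y] (μ : Measure X) (ν : Measure Y) :
    Set (Measure (X × Y)) :=
  {π | π.map Prod.fst = μ ∧ π.map Prod.snd = ν}

/-- The `1`-Wasserstein distance `W(μ,ν)` (for measures of equal mass;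
junk value otherwise). -/
def Wass {X : Type} [PseudoMetricSpace X] [MeasurableSpace X] (μ ν : Measure X) : ℝ :=
  sInf {r : ℝ | ∃ π ∈ plans μ ν, r = ∫ q, dist q.1 q.2 ∂π}

/-- The set `P^opt(μ,ν)` of optimal transference plans: plans realizing `W(μ,ν)`. -/
def OptPlans {X : Type} [PseudoMetricSpace X] [MeasurableSpace X] (μ ν : Measure X) :
    Set (Measure (X × X)) :=
  {π | π ∈ plans μ ν ∧ ∫ q, dist q.1 q.2 ∂π = Wass μ ν}

/-- The generalized Wasserstein distance `W^g(μ,ν)` (with parameters `a = b = 1`, `p = 1`). -/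
def GWass {X : Type} [PseudoMetricSpace X] [MeasurableSpace X] (μ ν : Measure X) : ℝ :=
  sInf {r : ℝ | ∃ μ' ν' : Measure X, GoodMeasure μ' ∧ GoodMeasure ν' ∧ mass μ' = mass ν' ∧
    r = tv μ μ' + tv ν ν' + Wass μ' ν'}

/-- The `p`-Wasserstein distance `W_p(μ,ν) = |μ| (min ∫ d(x,y)^p dπ)^{1/p}`, the minimum over
probability plans between the normalized measures `μ/|μ|` and `ν/|ν|`. -/
def WassP {X : Type} [PseudoMetricSpace X] [MeasurableSpace X] (p : ℝ) (μ ν : Measure X) : ℝ :=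
  sInf {r : ℝ | ∃ π : Measure (X × X), IsProbabilityMeasure π ∧
    π.map Prod.fst = (ENNReal.ofReal (mass μ))⁻¹ • μ ∧
    π.map Prod.snd = (ENNReal.ofReal (mass ν))⁻¹ • ν ∧
    r = mass μ * (∫ q, dist q.1 q.2 ^ p ∂π) ^ (1 / p)}

/-- Test functions: smooth and compactly supported. -/
def TestFun {n : ℕ} (f : Euc n → ℝ) : Prop := ContDiff ℝ (⊤ : ℕ∞) f ∧ HasCompactSupport f

/-- A Probability Vector Field: `V : 𝓜(ℝ^n) → 𝓜(Tℝ^n)` with `π₁#V[μ] = μ`. -/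
def IsPVF {n : ℕ} (V : Measure (Euc n) → Measure (TEuc n)) : Prop :=
  ∀ μ : Measure (Euc n), GoodMeasure μ → GoodMeasure (V μ) ∧ (V μ).map Prod.fst = μ

/-- The operator `𝒲(V₁,V₂)`: infimum of the fiber cost over plans between `V₁` and `V₂`
whose projection on the base is an optimal plan. -/
def calW {n : ℕ} (V₁ V₂ : Measure (TEuc n)) : ℝ :=
  sInf {r : ℝ | ∃ p : Measure (TEuc n × TEuc n), p ∈ plans V₁ V₂ ∧
    p.map (fun q => (q.1.1, q.2.1)) ∈ OptPlans (V₁.map Prod.fst) (V₂.map Prod.fst) ∧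
    r = ∫ q, ‖q.1.2 - q.2.2‖ ∂p}

/-- The operator `𝒲^g(V₁,V₂)`: infimum of the fiber cost over sub-PVFs `Ṽᵢ ≤ Vᵢ` whose base
projections realize `W^g(π₁#V₁, π₁#V₂)`, and plans between them projecting to an optimal plan. -/
def calWg {n : ℕ} (V₁ V₂ : Measure (TEuc n)) : ℝ :=
  sInf {r : ℝ | ∃ (W₁ W₂ : Measure (TEuc n)) (p : Measure (TEuc n × TEuc n)),
    W₁ ≤ V₁ ∧ W₂ ≤ V₂ ∧ p ∈ plans W₁ W₂ ∧
    GWass (V₁.map Prod.fst) (V₂.map Prod.fst) =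
      tv (V₁.map Prod.fst) (W₁.map Prod.fst) + Wass (W₁.map Prod.fst) (W₂.map Prod.fst) +
        tv (V₂.map Prod.fst) (W₂.map Prod.fst) ∧
    p.map (fun q => (q.1.1, q.2.1)) ∈ OptPlans (W₁.map Prod.fst) (W₂.map Prod.fst) ∧
    r = ∫ q, ‖q.1.2 - q.2.2‖ ∂p}

/-- Hypothesis (V1): support sublinearity,
`sup_{(x,v) ∈ supp V[μ]} |v| ≤ C (1 + sup_{x ∈ supp μ} |x|)`. -/
def V1cond {n : ℕ} (V : Measure (Euc n) → Measure (TEuc n)) : Prop :=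
  ∃ C : ℝ, 0 < C ∧ ∀ μ : Measure (Euc n), GoodMeasure μ → ∀ B : ℝ,
    (∀ x ∈ msupp μ, ‖x‖ ≤ B) → ∀ q ∈ msupp (V μ), ‖q.2‖ ≤ C * (1 + B)

/-- Continuity of a curve of measures with respect to `W^g`, on a set of times. -/
def WgContinuousOn {X : Type} [PseudoMetricSpace X] [MeasurableSpace X]
    (μ : ℝ → Measure X) (I : Set ℝ) : Prop :=
  ∀ t ∈ I, ∀ ε : ℝ, 0 < ε → ∃ δ > 0, ∀ t' ∈ I, |t' - t| < δ → GWass (μ t') (μ t) < ε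

/-- Weak solution of the Measure Differential Equation `μ̇ = V[μ]` on `[0,T]`. -/
def IsSolMDE {n : ℕ} (V : Measure (Euc n) → Measure (TEuc n)) (T : ℝ)
    (μ : ℝ → Measure (Euc n)) : Prop :=
  ∀ f : Euc n → ℝ, TestFun f →
    (∀ᵐ s ∂(volume.restrict (Set.Icc (0:ℝ) T)),
      Integrable (fun q : TEuc n => @inner ℝ _ _ (gradient f q.1) q.2) (V (μ s))) ∧
    IntegrableOn (fun s : ℝ =>
      ∫ q : TEuc n, @inner ℝ _ _ (gradient f q.1) q.2 ∂(V (μ s))) (Set.Icc (0:ℝ) T) ∧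
    ∀ t ∈ Set.Icc (0:ℝ) T,
      ∫ x, f x ∂(μ t) = (∫ x, f x ∂(μ 0)) +
        ∫ s in Set.Icc (0:ℝ) t, ∫ q : TEuc n, @inner ℝ _ _ (gradient f q.1) q.2 ∂(V (μ s))

/-- Weak solution of `μ̇ = s[μ]` on `[0,T]` with initial datum `μ₀`. -/
def IsSolSrc {n : ℕ} (s : Measure (Euc n) → Measure (Euc n)) (T : ℝ)
    (μ₀ : Measure (Euc n)) (μ : ℝ → Measure (Euc n)) : Prop :=
  μ 0 = μ₀ ∧ (∀ t ∈ Set.Icc (0:ℝ) T, GoodMeasure (μ t)) ∧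
  WgContinuousOn μ (Set.Icc (0:ℝ) T) ∧
  ∀ f : Euc n → ℝ, TestFun f →
    IntegrableOn (fun τ : ℝ => ∫ x, f x ∂(s (μ τ))) (Set.Icc (0:ℝ) T) ∧
    ∀ t ∈ Set.Icc (0:ℝ) T,
      ∫ x, f x ∂(μ t) = (∫ x, f x ∂μ₀) + ∫ τ in Set.Icc (0:ℝ) t, ∫ x, f x ∂(s (μ τ))

/-- Weak solution of the Measure Differential Equation with Source
`μ̇ = V[μ] ⊕ s[μ]` on `[0,T]` (Definition of solution in the paper). -/
def IsSolMDES {n : ℕ} (V : Measure (Euc n) → Measure (TEuc n))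
    (s : Measure (Euc n) → Measure (Euc n)) (T : ℝ) (μ : ℝ → Measure (Euc n)) : Prop :=
  (∀ t ∈ Set.Icc (0:ℝ) T, GoodMeasure (μ t)) ∧ WgContinuousOn μ (Set.Icc (0:ℝ) T) ∧
  ∀ f : Euc n → ℝ, TestFun f →
    (∀ᵐ τ ∂(volume.restrict (Set.Icc (0:ℝ) T)),
      Integrable (fun q : TEuc n => @inner ℝ _ _ (gradient f q.1) q.2) (V (μ τ))) ∧
    IntegrableOn (fun τ : ℝ =>
      ∫ q : TEuc n, @inner ℝ _ _ (gradient f q.1) q.2 ∂(V (μ τ))) (Set.Icc (0:ℝ) T) ∧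
    IntegrableOn (fun τ : ℝ => ∫ x, f x ∂(s (μ τ))) (Set.Icc (0:ℝ) T) ∧
    ∀ t ∈ Set.Icc (0:ℝ) T,
      ∫ x, f x ∂(μ t) = (∫ x, f x ∂(μ 0)) +
        ∫ τ in Set.Icc (0:ℝ) t,
          ((∫ q : TEuc n, @inner ℝ _ _ (gradient f q.1) q.2 ∂(V (μ τ))) + ∫ x, f x ∂(s (μ τ)))

/-- A Lipschitz semigroup of solutions to the MDE `μ̇ = V[μ]` (Wasserstein version). -/
def IsLipSemigroupMDE {n : ℕ} (V : Measure (Euc n) → Measure (TEuc n)) (T : ℝ)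
    (S : ℝ → Measure (Euc n) → Measure (Euc n)) : Prop :=
  (∀ μ, GoodMeasure μ → S 0 μ = μ) ∧
  (∀ a b : ℝ, 0 ≤ a → 0 ≤ b → a + b ≤ T → ∀ μ, GoodMeasure μ → S (b + a) μ = S b (S a μ)) ∧
  (∀ μ, GoodMeasure μ → (∀ t ∈ Set.Icc (0:ℝ) T, GoodMeasure (S t μ)) ∧
    IsSolMDE V T (fun t => S t μ)) ∧
  (∀ R M : ℝ, 0 < R → 0 < M → ∃ C : ℝ, 0 < C ∧ ∀ μ ν : Measure (Euc n),
    GoodMeasure μ → GoodMeasure ν → msupp μ ∪ msupp ν ⊆ ball (0 : Euc n) R →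
    mass μ + mass ν ≤ M → ∀ t ∈ Set.Icc (0:ℝ) T,
      msupp (S t μ) ⊆ ball (0 : Euc n) (Real.exp (C * t) * (R + M + 1)) ∧
      (mass μ = mass ν → Wass (S t μ) (S t ν) ≤ Real.exp (C * t) * Wass μ ν) ∧
      (∀ u ∈ Set.Icc (0:ℝ) T, Wass (S t μ) (S u μ) ≤ C * |t - u|))

/-- A Lipschitz semigroup of solutions to the MDE with source `μ̇ = V[μ] ⊕ s[μ]`
(generalized Wasserstein version, Definition of Lipschitz semigroup in the paper). -/
def IsLipSemigroupMDES {n : ℕ} (V : Measure (Euc n) → Measure (TEuc n))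
    (s : Measure (Euc n) → Measure (Euc n)) (T : ℝ)
    (S : ℝ → Measure (Euc n) → Measure (Euc n)) : Prop :=
  (∀ μ, GoodMeasure μ → S 0 μ = μ) ∧
  (∀ a b : ℝ, 0 ≤ a → 0 ≤ b → a + b ≤ T → ∀ μ, GoodMeasure μ → S (b + a) μ = S b (S a μ)) ∧
  (∀ μ, GoodMeasure μ → IsSolMDES V s T (fun t => S t μ)) ∧
  (∀ R M : ℝ, 0 < R → 0 < M → ∃ C : ℝ, 0 < C ∧ ∀ μ ν : Measure (Euc n),
    GoodMeasure μ → GoodMeasure ν → msupp μ ∪ msupp ν ⊆ ball (0 : Euc n) R →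
    mass μ + mass ν ≤ M → ∀ t ∈ Set.Icc (0:ℝ) T,
      msupp (S t μ) ⊆ ball (0 : Euc n) (Real.exp (C * t) * (R + M + 1)) ∧
      GWass (S t μ) (S t ν) ≤ Real.exp (C * t) * GWass μ ν ∧
      (∀ u ∈ Set.Icc (0:ℝ) T, GWass (S t μ) (S u μ) ≤ C * |t - u|))

/-- `𝓜^D`: finite sums of Dirac masses with positive weights. -/
def IsDiracSum {n : ℕ} (μ : Measure (Euc n)) : Prop :=
  ∃ (k : ℕ) (m : Fin k → ℝ) (x : Fin k → Euc n), (∀ i, 0 < m i) ∧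
    μ = ∑ i : Fin k, (ENNReal.ofReal (m i)) • Measure.dirac (x i)

/-- A Dirac germ compatible with the PVF `V` (MDE version): `γ_μ : [0, ε(μ)] → 𝓜` is a
Lipschitz solution starting at `μ`, with `ε` uniformly positive on sets of Dirac sums
with uniformly bounded support. -/
def IsDiracGermMDE {n : ℕ} (V : Measure (Euc n) → Measure (TEuc n))
    (ε : Measure (Euc n) → ℝ) (γ : Measure (Euc n) → ℝ → Measure (Euc n)) : Prop :=
  (∀ μ, GoodMeasure μ → IsDiracSum μ →
    0 < ε μ ∧ γ μ 0 = μ ∧ (∀ t ∈ Set.Icc (0:ℝ) (ε μ), GoodMeasure (γ μ t)) ∧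
    IsSolMDE V (ε μ) (γ μ) ∧
    ∃ Lγ : ℝ, ∀ t ∈ Set.Icc (0:ℝ) (ε μ), ∀ u ∈ Set.Icc (0:ℝ) (ε μ),
      Wass (γ μ t) (γ μ u) ≤ Lγ * |t - u|) ∧
  (∀ R : ℝ, 0 < R → ∃ e : ℝ, 0 < e ∧ ∀ μ, GoodMeasure μ → IsDiracSum μ →
    msupp μ ⊆ ball (0 : Euc n) R → e ≤ ε μ)

/-- A Dirac germ for the MDE with source `μ̇ = V[μ] ⊕ s[μ]`. -/
def IsDiracGermMDES {n : ℕ} (V : Measure (Euc n) → Measure (TEuc n))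
    (s : Measure (Euc n) → Measure (Euc n))
    (ε : Measure (Euc n) → ℝ) (γ : Measure (Euc n) → ℝ → Measure (Euc n)) : Prop :=
  (∀ μ, GoodMeasure μ → IsDiracSum μ →
    0 < ε μ ∧ γ μ 0 = μ ∧ IsSolMDES V s (ε μ) (γ μ) ∧
    ∃ Lγ : ℝ, ∀ t ∈ Set.Icc (0:ℝ) (ε μ), ∀ u ∈ Set.Icc (0:ℝ) (ε μ),
      GWass (γ μ t) (γ μ u) ≤ Lγ * |t - u|) ∧
  (∀ R : ℝ, 0 < R → ∃ e : ℝ, 0 < e ∧ ∀ μ, GoodMeasure μ → IsDiracSum μ →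
    msupp μ ⊆ ball (0 : Euc n) R → e ≤ ε μ)

/-- Compatibility of a semigroup with a Dirac germ (Wasserstein version):
`W(S_t μ, γ_μ(t)) ≤ C(R,M) t²` for Dirac sums `μ` supported in `B(0,R)` with mass `≤ M`,
for times `t ≤ T` below the infimum of `ε` on this class. -/
def CompatMDE {n : ℕ} (T : ℝ) (S : ℝ → Measure (Euc n) → Measure (Euc n))
    (ε : Measure (Euc n) → ℝ) (γ : Measure (Euc n) → ℝ → Measure (Euc n)) : Prop :=
  ∀ R M : ℝ, 0 < R → 0 < M → ∃ C : ℝ, ∀ μ, GoodMeasure μ → IsDiracSum μ →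
    msupp μ ⊆ ball (0 : Euc n) R → mass μ ≤ M →
    ∀ t : ℝ, 0 ≤ t → t ≤ T →
      (∀ μ', GoodMeasure μ' → IsDiracSum μ' → msupp μ' ⊆ ball (0 : Euc n) R → mass μ' ≤ M →
        t ≤ ε μ') →
      Wass (S t μ) (γ μ t) ≤ C * t ^ 2

/-- Compatibility of a semigroup with a Dirac germ (generalized Wasserstein version). -/
def CompatMDES {n : ℕ} (T : ℝ) (S : ℝ → Measure (Euc n) → Measure (Euc n))
    (ε : Measure (Euc n) → ℝ) (γ : Measure (Euc n) → ℝ → Measure (Euc n)) : Prop :=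
  ∀ R M : ℝ, 0 < R → 0 < M → ∃ C : ℝ, ∀ μ, GoodMeasure μ → IsDiracSum μ →
    msupp μ ⊆ ball (0 : Euc n) R → mass μ ≤ M →
    ∀ t : ℝ, 0 ≤ t → t ≤ T →
      (∀ μ', GoodMeasure μ' → IsDiracSum μ' → msupp μ' ⊆ ball (0 : Euc n) R → mass μ' ≤ M →
        t ≤ ε μ') →
      GWass (S t μ) (γ μ t) ≤ C * t ^ 2

/-- Coordinatewise flooring to the grid `ℤ^n / h` of mesh `1/h`. -/
def floorPt {n : ℕ} (h : ℝ) (x : Euc n) : Euc n :=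
  (WithLp.equiv 2 (Fin n → ℝ)).symm
    (fun k => (⌊(WithLp.equiv 2 (Fin n → ℝ) x) k * h⌋ : ℝ) / h)

/-- The region `[-N, N + 1/h)^n` covered by the cubes based at grid points of mesh `1/h`
inside `[-N,N]^n`. -/
def gridRegion (n : ℕ) (N : ℕ) (h : ℝ) : Set (Euc n) :=
  {x | ∀ k : Fin n, (WithLp.equiv 2 (Fin n → ℝ) x) k ∈ Set.Ico (-(N:ℝ)) ((N:ℝ) + 1 / h)}

/-- Space discretization operator `𝒜ˣ_N(μ) = ∑ᵢ μ(xᵢ + Q) δ_{xᵢ}`, `Q = [0,1/N²)^n`. -/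
def AxN {n : ℕ} (N : ℕ) (μ : Measure (Euc n)) : Measure (Euc n) :=
  (μ.restrict (gridRegion n N ((N:ℝ)^2))).map (floorPt ((N:ℝ)^2))

/-- Velocity discretization operator
`𝒜ᵛ_N(V) = ∑_{i,j} V((xᵢ+Q) × (vⱼ+Q')) δ_{(xᵢ,vⱼ)}`, `Q' = [0,1/N)^n`. -/
def AvN {n : ℕ} (N : ℕ) (V : Measure (TEuc n)) : Measure (TEuc n) :=
  (V.restrict ((gridRegion n N ((N:ℝ)^2)) ×ˢ (gridRegion n N (N:ℝ)))).map
    (fun q => (floorPt ((N:ℝ)^2) q.1, floorPt (N:ℝ) q.2))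



set_option linter.unusedSectionVars false
set_option maxHeartbeats 1000000
open ProbabilityTheory

-- ============ A. basics ============
section A
variable {X : Type} [MeasurableSpace X] {μ ν : Measure X}

lemma good_finite {X : Type} [PseudoMetricSpace X] [MeasurableSpace X] {μ : Measure X}
    (h : GoodMeasure μ) : IsFiniteMeasure μ := ⟨lt_top_iff_ne_top.2 h.1⟩

lemma mass_nonneg (μ : Measure X) : 0 ≤ mass μ := ENNReal.toReal_nonneg

lemma mass_mono [IsFiniteMeasure ν] (h : μ ≤ ν) : mass μ ≤ mass ν :=
  ENNReal.toReal_mono (measure_ne_top ν _) (h _)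

lemma mass_zero : mass (0 : Measure X) = 0 := by simp [mass]

lemma tv_nonneg [IsFiniteMeasure μ] [IsFiniteMeasure ν] : 0 ≤ tv μ ν := by
  have h1 : mass (μ ⊓ ν) ≤ mass μ := mass_mono inf_le_left
  have h2 : mass (μ ⊓ ν) ≤ mass ν := mass_mono inf_le_right
  unfold tv; linarith

lemma tv_symm : tv μ ν = tv ν μ := by unfold tv; rw [inf_comm]; ring

lemma tv_self : tv μ μ = 0 := by unfold tv; rw [inf_idem]; ring

lemma msupp_mono {X : Type} [TopologicalSpace X] [MeasurableSpace X] {μ ν : Measure X}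
    (h : μ ≤ ν) : msupp μ ⊆ msupp ν := by
  intro x hx U hU
  exact fun h0 => hx U hU (le_antisymm (le_trans (h U) h0.le) zero_le)

lemma good_of_le {X : Type} [PseudoMetricSpace X] [MeasurableSpace X] {μ ν : Measure X}
    (h : μ ≤ ν) (hν : GoodMeasure ν) : GoodMeasure μ :=
  ⟨fun h0 => hν.1 (top_le_iff.mp (h0 ▸ h Set.univ)), hν.2.subset (msupp_mono h)⟩

lemma msupp_closed {X : Type} [TopologicalSpace X] [MeasurableSpace X] (μ : Measure X) :
    IsClosed (msupp μ) := by
  rw [← isOpen_compl_iff]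
  rw [isOpen_iff_mem_nhds]
  intro x hx
  simp only [msupp, mem_compl_iff, mem_setOf_eq, not_forall] at hx
  obtain ⟨U, hU, hU0⟩ := hx
  push_neg at hU0
  filter_upwards [eventually_eventually_nhds.mpr hU] with y hy
  simp only [msupp, mem_compl_iff, mem_setOf_eq, not_forall]
  exact ⟨U, hy, by push_neg; exact hU0⟩

lemma compl_msupp_null {X : Type} [TopologicalSpace X] [SecondCountableTopology X]
    [MeasurableSpace X] (μ : Measure X) : μ (msupp μ)ᶜ = 0 := by
  apply measure_null_of_locally_null
  intro x hx
  simp only [msupp, mem_compl_iff, mem_setOf_eq, not_forall] at hx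
  obtain ⟨U, hU, hU0⟩ := hx
  push_neg at hU0
  exact ⟨U, nhdsWithin_le_nhds hU, hU0⟩

end A

section C
variable {X : Type} [MeasurableSpace X] {μ ν : Measure X}

lemma bdd_integrable [IsFiniteMeasure μ] {f : X → ℝ} (hf : AEStronglyMeasurable f μ)
    {C : ℝ} (hC : ∀ x, |f x| ≤ C) : Integrable f μ :=
  Integrable.mono' (integrable_const C) hf (Eventually.of_forall fun x => by
    rw [Real.norm_eq_abs]; exact hC x)

lemma integral_le_mass [IsFiniteMeasure μ] {f : X → ℝ} (hC : ∀ x, |f x| ≤ 1) :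
    ∫ x, f x ∂μ ≤ mass μ := by
  calc ∫ x, f x ∂μ ≤ ‖∫ x, f x ∂μ‖ := le_abs_self _
  _ ≤ 1 * (μ Set.univ).toReal := norm_integral_le_of_norm_le_const
      (Eventually.of_forall fun x => by rw [Real.norm_eq_abs]; exact hC x)
  _ = mass μ := by rw [one_mul]; rfl

/-- |∫ f dμ - ∫ f dν| ≤ tv μ ν for |f| ≤ 1 -/
lemma integral_diff_le_tv [IsFiniteMeasure μ] [IsFiniteMeasure ν] {f : X → ℝ}
    (hfm : Measurable f) (hC : ∀ x, |f x| ≤ 1) :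
    ∫ x, f x ∂μ - ∫ x, f x ∂ν ≤ tv μ ν := by
  set i := μ ⊓ ν with hi
  have hiμ : i ≤ μ := inf_le_left
  have hiν : i ≤ ν := inf_le_right
  have : IsFiniteMeasure i := isFiniteMeasure_of_le μ hiμ
  have hμd : μ - i + i = μ := Measure.sub_add_cancel_of_le hiμ
  have hνd : ν - i + i = ν := Measure.sub_add_cancel_of_le hiν
  have hfin1 : IsFiniteMeasure (μ - i) := isFiniteMeasure_of_le μ (Measure.sub_le)
  have hfin2 : IsFiniteMeasure (ν - i) := isFiniteMeasure_of_le ν (Measure.sub_le)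
  have int1 : Integrable f (μ - i) := bdd_integrable hfm.aestronglyMeasurable hC
  have int2 : Integrable f (ν - i) := bdd_integrable hfm.aestronglyMeasurable hC
  have int3 : Integrable f i := bdd_integrable hfm.aestronglyMeasurable hC
  have e1 : ∫ x, f x ∂μ = ∫ x, f x ∂(μ - i) + ∫ x, f x ∂i := by
    conv_lhs => rw [← hμd]
    exact integral_add_measure int1 int3
  have e2 : ∫ x, f x ∂ν = ∫ x, f x ∂(ν - i) + ∫ x, f x ∂i := by
    conv_lhs => rw [← hνd]
    exact integral_add_measure int2 int3
  have b1 : ∫ x, f x ∂(μ - i) ≤ mass (μ - i) := integral_le_mass hC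
  have b2 : -mass (ν - i) ≤ ∫ x, f x ∂(ν - i) := by
    have := integral_le_mass (μ := ν - i) (f := fun x => -f x) (fun x => by
      rw [abs_neg]; exact hC x)
    rw [integral_neg] at this; linarith
  have m1 : mass (μ - i) = mass μ - mass i := by
    unfold mass
    rw [Measure.sub_apply MeasurableSet.univ hiμ,
      ENNReal.toReal_sub_of_le (hiμ Set.univ) (measure_ne_top μ _)]
  have m2 : mass (ν - i) = mass ν - mass i := by
    unfold mass
    rw [Measure.sub_apply MeasurableSet.univ hiν,
      ENNReal.toReal_sub_of_le (hiν Set.univ) (measure_ne_top ν _)]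
  unfold tv
  rw [e1, e2]
  rw [m1] at b1; rw [m2] at b2
  linarith

end C

section F
variable {X : Type} [MeasurableSpace X] {μ ν ω : Measure X}

lemma rnDeriv_mono_ae [IsFiniteMeasure μ] [IsFiniteMeasure ν] [SigmaFinite ω]
    (h : μ ≤ ν) (hν : ν ≪ ω) : μ.rnDeriv ω ≤ᵐ[ω] ν.rnDeriv ω := by
  have hμ : μ ≪ ω := (Measure.absolutelyContinuous_of_le h).trans hν
  apply ae_le_of_forall_setLIntegral_le_of_sigmaFinite (μ.measurable_rnDeriv ω)
  intro s hs _
  rw [Measure.setLIntegral_rnDeriv hμ s, Measure.setLIntegral_rnDeriv hν s]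
  exact h s

lemma inf_eq_withDensity [IsFiniteMeasure μ] [IsFiniteMeasure ν] [IsFiniteMeasure ω]
    (hμ : μ ≪ ω) (hν : ν ≪ ω) :
    μ ⊓ ν = ω.withDensity (fun x => μ.rnDeriv ω x ⊓ ν.rnDeriv ω x) := by
  apply le_antisymm
  · set ξ := μ ⊓ ν with hξ
    have hξμ : ξ ≤ μ := inf_le_left
    have hξν : ξ ≤ ν := inf_le_right
    have : IsFiniteMeasure ξ := isFiniteMeasure_of_le μ hξμ
    have hξω : ξ ≪ ω := (Measure.absolutelyContinuous_of_le hξμ).trans hμ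
    calc ξ = ω.withDensity (ξ.rnDeriv ω) := (Measure.withDensity_rnDeriv_eq ξ ω hξω).symm
    _ ≤ ω.withDensity (fun x => μ.rnDeriv ω x ⊓ ν.rnDeriv ω x) := by
        apply withDensity_mono
        filter_upwards [rnDeriv_mono_ae hξμ hμ, rnDeriv_mono_ae hξν hν] with x h1 h2
        exact le_inf h1 h2
  · apply le_inf
    · calc ω.withDensity (fun x => μ.rnDeriv ω x ⊓ ν.rnDeriv ω x)
          ≤ ω.withDensity (μ.rnDeriv ω) := withDensity_mono (Eventually.of_forall fun x => inf_le_left)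
      _ = μ := Measure.withDensity_rnDeriv_eq μ ω hμ
    · calc ω.withDensity (fun x => μ.rnDeriv ω x ⊓ ν.rnDeriv ω x)
          ≤ ω.withDensity (ν.rnDeriv ω) := withDensity_mono (Eventually.of_forall fun x => inf_le_right)
      _ = ν := Measure.withDensity_rnDeriv_eq ν ω hν

lemma inf_univ_eq [IsFiniteMeasure μ] [IsFiniteMeasure ν] [IsFiniteMeasure ω]
    (hμ : μ ≪ ω) (hν : ν ≪ ω) :
    (μ ⊓ ν) Set.univ = ∫⁻ x, μ.rnDeriv ω x ⊓ ν.rnDeriv ω x ∂ω := by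
  rw [inf_eq_withDensity hμ hν, withDensity_apply _ MeasurableSet.univ, setLIntegral_univ]

/-- core A : mass (g⊓f₁) + mass (g⊓f₂) ≤ mass g + mass (f₁⊓f₂) -/
lemma core_massA (g f₁ f₂ : Measure X) [IsFiniteMeasure g] [IsFiniteMeasure f₁]
    [IsFiniteMeasure f₂] :
    mass (g ⊓ f₁) + mass (g ⊓ f₂) ≤ mass g + mass (f₁ ⊓ f₂) := by
  set ω := g + f₁ + f₂ with hω
  have hg : g ≪ ω := Measure.absolutelyContinuous_of_le (by
    calc g ≤ g + f₁ := Measure.le_add_right le_rfl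
    _ ≤ ω := Measure.le_add_right le_rfl)
  have h1 : f₁ ≪ ω := Measure.absolutelyContinuous_of_le (by
    calc f₁ ≤ g + f₁ := Measure.le_add_left le_rfl
    _ ≤ ω := Measure.le_add_right le_rfl)
  have h2 : f₂ ≪ ω := Measure.absolutelyContinuous_of_le (Measure.le_add_left le_rfl)
  set a := g.rnDeriv ω with ha
  set b := f₁.rnDeriv ω with hb
  set c := f₂.rnDeriv ω with hc
  have ma : Measurable a := g.measurable_rnDeriv ω
  have mb : Measurable b := f₁.measurable_rnDeriv ω
  have mc : Measurable c := f₂.measurable_rnDeriv ω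
  have key : (g ⊓ f₁) Set.univ + (g ⊓ f₂) Set.univ ≤ g Set.univ + (f₁ ⊓ f₂) Set.univ := by
    rw [inf_univ_eq hg h1, inf_univ_eq hg h2, inf_univ_eq h1 h2,
      ← Measure.setLIntegral_rnDeriv hg Set.univ, setLIntegral_univ,
      ← lintegral_add_left (ma.min mb), ← lintegral_add_left ma]
    apply lintegral_mono
    intro x
    rcases le_total (b x) (c x) with hbc | hbc
    · calc a x ⊓ b x + a x ⊓ c x ≤ b x + a x :=
        add_le_add inf_le_right inf_le_left
      _ = a x + b x ⊓ c x := by rw [add_comm, inf_eq_left.mpr hbc]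
    · calc a x ⊓ b x + a x ⊓ c x ≤ a x + c x :=
        add_le_add inf_le_left inf_le_right
      _ = a x + b x ⊓ c x := by rw [inf_eq_right.mpr hbc]
  have fi : ∀ (κ l : Measure X) [IsFiniteMeasure κ] [IsFiniteMeasure l],
      mass κ + mass l = ((κ Set.univ) + (l Set.univ)).toReal := by
    intro κ l _ _
    rw [ENNReal.toReal_add (measure_ne_top κ _) (measure_ne_top l _)]; rfl
  have i1 : IsFiniteMeasure (g ⊓ f₁) := isFiniteMeasure_of_le g inf_le_left
  have i2 : IsFiniteMeasure (g ⊓ f₂) := isFiniteMeasure_of_le g inf_le_left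
  have i3 : IsFiniteMeasure (f₁ ⊓ f₂) := isFiniteMeasure_of_le f₁ inf_le_left
  rw [fi (g ⊓ f₁) (g ⊓ f₂), fi g (f₁ ⊓ f₂)]
  exact ENNReal.toReal_mono (by
    exact ENNReal.add_ne_top.mpr ⟨measure_ne_top g _, measure_ne_top _ _⟩) key

/-- core B : μ₃ ≤ μ₁ → mass (μ⊓μ₁) + mass μ₃ ≤ mass (μ⊓μ₃) + mass μ₁ -/
lemma core_massB (μ μ₁ μ₃ : Measure X) [IsFiniteMeasure μ] [IsFiniteMeasure μ₁]
    [IsFiniteMeasure μ₃] (h31 : μ₃ ≤ μ₁) :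
    mass (μ ⊓ μ₁) + mass μ₃ ≤ mass (μ ⊓ μ₃) + mass μ₁ := by
  set ω := μ + μ₁ with hω
  have hμ : μ ≪ ω := Measure.absolutelyContinuous_of_le (Measure.le_add_right le_rfl)
  have h1 : μ₁ ≪ ω := Measure.absolutelyContinuous_of_le (Measure.le_add_left le_rfl)
  have h3 : μ₃ ≪ ω := Measure.absolutelyContinuous_of_le (le_trans h31 (Measure.le_add_left le_rfl))
  set a := μ.rnDeriv ω with ha
  set b := μ₁.rnDeriv ω with hb
  set c := μ₃.rnDeriv ω with hc
  have ma : Measurable a := μ.measurable_rnDeriv ω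
  have mc : Measurable c := μ₃.measurable_rnDeriv ω
  have key : (μ ⊓ μ₁) Set.univ + μ₃ Set.univ ≤ (μ ⊓ μ₃) Set.univ + μ₁ Set.univ := by
    rw [inf_univ_eq hμ h1, inf_univ_eq hμ h3,
      ← Measure.setLIntegral_rnDeriv h3 Set.univ, setLIntegral_univ,
      ← Measure.setLIntegral_rnDeriv h1 Set.univ, setLIntegral_univ,
      ← lintegral_add_left (ma.min (μ₁.measurable_rnDeriv ω)),
      ← lintegral_add_left (ma.min mc)]
    apply lintegral_mono_ae
    filter_upwards [rnDeriv_mono_ae h31 h1] with x h31x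
    rcases le_total (a x) (c x) with hac | hac
    · calc a x ⊓ b x + c x ≤ a x + b x := add_le_add inf_le_left h31x
      _ = a x ⊓ c x + b x := by rw [inf_eq_left.mpr hac]
    · calc a x ⊓ b x + c x ≤ b x + c x := add_le_add inf_le_right le_rfl
      _ = a x ⊓ c x + b x := by rw [inf_eq_right.mpr hac, add_comm]
  have fi : ∀ (κ l : Measure X) [IsFiniteMeasure κ] [IsFiniteMeasure l],
      mass κ + mass l = ((κ Set.univ) + (l Set.univ)).toReal := by
    intro κ l _ _
    rw [ENNReal.toReal_add (measure_ne_top κ _) (measure_ne_top l _)]; rfl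
  have i1 : IsFiniteMeasure (μ ⊓ μ₁) := isFiniteMeasure_of_le μ inf_le_left
  have i2 : IsFiniteMeasure (μ ⊓ μ₃) := isFiniteMeasure_of_le μ inf_le_left
  rw [fi (μ ⊓ μ₁) μ₃, fi (μ ⊓ μ₃) μ₁]
  exact ENNReal.toReal_mono
    (ENNReal.add_ne_top.mpr ⟨measure_ne_top _ _, measure_ne_top μ₁ _⟩) key

/-- tv against a smaller measure -/
lemma tv_sub_le (μ μ₁ μ₃ : Measure X) [IsFiniteMeasure μ] [IsFiniteMeasure μ₁]
    [IsFiniteMeasure μ₃] (h31 : μ₃ ≤ μ₁) :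
    tv μ μ₃ ≤ tv μ μ₁ + (mass μ₁ - mass μ₃) := by
  have := core_massB μ μ₁ μ₃ h31
  unfold tv; linarith

lemma tv_two_sided (ν ν₁ ν₂ : Measure X) [IsFiniteMeasure ν] [IsFiniteMeasure ν₁]
    [IsFiniteMeasure ν₂] :
    (mass ν₁ - mass (ν₁ ⊓ ν₂)) + (mass ν₂ - mass (ν₁ ⊓ ν₂)) ≤ tv ν ν₁ + tv ν ν₂ := by
  have := core_massA ν ν₁ ν₂
  unfold tv; linarith

end F

-- ============ B. plans and Wass ============
set_option linter.unusedSectionVars false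
section B
variable {X : Type} [PseudoMetricSpace X] [MeasurableSpace X] [OpensMeasurableSpace X]
  [SecondCountableTopology X]
variable {μ ν : Measure X} {π : Measure (X × X)}

lemma plan_univ (h : π ∈ plans μ ν) : π Set.univ = μ Set.univ ∧ π Set.univ = ν Set.univ := by
  constructor
  · rw [← h.1, Measure.map_apply measurable_fst MeasurableSet.univ]; rfl
  · rw [← h.2, Measure.map_apply measurable_snd MeasurableSet.univ]; rfl

lemma plan_finite (h : π ∈ plans μ ν) [IsFiniteMeasure μ] : IsFiniteMeasure π :=
  ⟨by rw [(plan_univ h).1]; exact measure_lt_top μ _⟩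

lemma plan_mass (h : π ∈ plans μ ν) : mass μ = mass ν := by
  unfold mass; rw [← (plan_univ h).1, ← (plan_univ h).2]

/-- a.e. point of a plan lies in the product of the supports -/
lemma plan_ae_msupp (h : π ∈ plans μ ν) :
    ∀ᵐ q ∂π, q.1 ∈ msupp μ ∧ q.2 ∈ msupp ν := by
  have h1 : π ((fun q : X × X => q.1) ⁻¹' (msupp μ)ᶜ) = 0 := by
    rw [← Measure.map_apply measurable_fst (msupp_closed μ).measurableSet.compl, h.1]
    exact compl_msupp_null μ
  have h2 : π ((fun q : X × X => q.2) ⁻¹' (msupp ν)ᶜ) = 0 := by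
    rw [← Measure.map_apply measurable_snd (msupp_closed ν).measurableSet.compl, h.2]
    exact compl_msupp_null ν
  refine ae_iff.mpr (measure_mono_null ?_ (measure_union_null h1 h2))
  intro q hq
  simp only [mem_setOf_eq, not_and] at hq
  by_cases h1 : q.1 ∈ msupp μ
  · exact Or.inr (hq h1)
  · exact Or.inl h1

lemma plan_dist_bound [Nonempty X] (h : π ∈ plans μ ν) (hμ : GoodMeasure μ)
    (hν : GoodMeasure ν) : ∃ C : ℝ, 0 ≤ C ∧ ∀ᵐ q ∂π, dist q.1 q.2 ≤ C := by
  obtain ⟨r, hr⟩ := (hμ.2.union hν.2).subset_closedBall (Classical.arbitrary X)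
  refine ⟨2 * max r 0, by positivity, ?_⟩
  filter_upwards [plan_ae_msupp h] with q hq
  have h1 : q.1 ∈ closedBall (Classical.arbitrary X) r := hr (Or.inl hq.1)
  have h2 : q.2 ∈ closedBall (Classical.arbitrary X) r := hr (Or.inr hq.2)
  simp only [mem_closedBall] at h1 h2
  have := dist_triangle q.1 (Classical.arbitrary X) q.2
  have := dist_comm (Classical.arbitrary X) q.2
  have hm : r ≤ max r 0 := le_max_left _ _
  nlinarith [dist_nonneg (x := q.1) (y := Classical.arbitrary X)]

lemma plan_dist_integrable [Nonempty X] (h : π ∈ plans μ ν) (hμ : GoodMeasure μ)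
    (hν : GoodMeasure ν) : Integrable (fun q : X × X => dist q.1 q.2) π := by
  have : IsFiniteMeasure μ := good_finite hμ
  have : IsFiniteMeasure π := plan_finite h
  obtain ⟨C, _, hC⟩ := plan_dist_bound h hμ hν
  refine Integrable.mono' (integrable_const C) ?_ ?_
  · exact (continuous_dist.comp (continuous_fst.prodMk continuous_snd)).aestronglyMeasurable
  · filter_upwards [hC] with q hq
    rwa [Real.norm_of_nonneg dist_nonneg]

lemma Wass_nonneg (μ ν : Measure X) : 0 ≤ Wass μ ν := by
  apply Real.sInf_nonneg
  rintro r ⟨π, -, rfl⟩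
  exact integral_nonneg fun q => dist_nonneg

lemma wassSet_bddBelow (μ ν : Measure X) :
    BddBelow {r : ℝ | ∃ π ∈ plans μ ν, r = ∫ q, dist q.1 q.2 ∂π} :=
  ⟨0, by rintro r ⟨π, -, rfl⟩; exact integral_nonneg fun q => dist_nonneg⟩

lemma Wass_le_cost (h : π ∈ plans μ ν) : Wass μ ν ≤ ∫ q, dist q.1 q.2 ∂π :=
  csInf_le (wassSet_bddBelow μ ν) ⟨π, h, rfl⟩

lemma plans_nonempty (hμ : μ Set.univ ≠ ⊤) (h : μ Set.univ = ν Set.univ) :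
    (plans μ ν).Nonempty := by
  rcases eq_or_ne (μ Set.univ) 0 with h0 | h0
  · have hμ0 : μ = 0 := Measure.measure_univ_eq_zero.mp h0
    have hν0 : ν = 0 := Measure.measure_univ_eq_zero.mp (h ▸ h0)
    exact ⟨0, by simp [plans, hμ0, hν0]⟩
  · have : IsFiniteMeasure μ := ⟨lt_top_iff_ne_top.2 hμ⟩
    have : IsFiniteMeasure ν := ⟨lt_top_iff_ne_top.2 (h ▸ hμ)⟩
    refine ⟨(μ Set.univ)⁻¹ • (μ.prod ν), ?_, ?_⟩
    · rw [Measure.map_smul, Measure.map_fst_prod, ← h, smul_smul,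
        ENNReal.inv_mul_cancel h0 hμ, one_smul]
    · rw [Measure.map_smul, Measure.map_snd_prod, h, smul_smul,
        ENNReal.inv_mul_cancel (h ▸ h0) (h ▸ hμ), one_smul]

lemma exists_plan_cost_lt (hμ : GoodMeasure μ) (h : μ Set.univ = ν Set.univ) {ε : ℝ}
    (hε : 0 < ε) : ∃ π ∈ plans μ ν, ∫ q, dist q.1 q.2 ∂π < Wass μ ν + ε := by
  obtain ⟨π, hπ⟩ := plans_nonempty hμ.1 h
  have hne : {r : ℝ | ∃ π ∈ plans μ ν, r = ∫ q, dist q.1 q.2 ∂π}.Nonempty := ⟨_, π, hπ, rfl⟩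
  obtain ⟨r, ⟨π', hπ', rfl⟩, hlt⟩ :=
    exists_lt_of_csInf_lt hne (lt_add_of_pos_right (Wass μ ν) hε)
  exact ⟨π', hπ', hlt⟩

/-- diagonal plan: Wass μ μ = 0 -/
lemma Wass_self [BorelSpace X] (μ : Measure X) : Wass μ μ = 0 := by
  have hdiag : Measurable (fun x : X => (x, x)) := measurable_id.prodMk measurable_id
  have hmem : μ.map (fun x => (x, x)) ∈ plans μ μ := by
    constructor
    · rw [Measure.map_map measurable_fst hdiag]; exact Measure.map_id
    · rw [Measure.map_map measurable_snd hdiag]; exact Measure.map_id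
  have hz := integral_map (μ := μ) hdiag.aemeasurable (f := fun q : X × X => dist q.1 q.2)
    (continuous_dist.comp (continuous_fst.prodMk continuous_snd)).aestronglyMeasurable
  simp only [dist_self, integral_zero] at hz
  exact le_antisymm (hz ▸ Wass_le_cost hmem) (Wass_nonneg μ μ)

end B

section G
variable {X : Type} [PseudoMetricSpace X] [MeasurableSpace X] [OpensMeasurableSpace X]
  [SecondCountableTopology X] [Nonempty X]

lemma dist_cont : Continuous (fun q : X × X => dist q.1 q.2) :=
  continuous_dist.comp (continuous_fst.prodMk continuous_snd)

lemma cost_mono {π' π : Measure (X × X)} (h : π' ≤ π)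
    (hint : Integrable (fun q : X × X => dist q.1 q.2) π) :
    ∫ q, dist q.1 q.2 ∂π' ≤ ∫ q, dist q.1 q.2 ∂π := by
  have hd : ∀ κ : Measure (X × X), AEStronglyMeasurable (fun q : X × X => dist q.1 q.2) κ :=
    fun κ => dist_cont.aestronglyMeasurable
  rw [integral_eq_lintegral_of_nonneg_ae (Eventually.of_forall fun q => dist_nonneg) (hd π'),
    integral_eq_lintegral_of_nonneg_ae (Eventually.of_forall fun q => dist_nonneg) (hd π)]
  apply ENNReal.toReal_mono
  · have := hint.hasFiniteIntegral
    rw [HasFiniteIntegral] at this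
    refine ne_of_lt (lt_of_le_of_lt (le_of_eq (lintegral_congr fun q => ?_)) this)
    rw [← ofReal_norm, Real.norm_of_nonneg dist_nonneg]
  · exact lintegral_mono' h le_rfl

/-- Restriction of a transference plan to a smaller second marginal. -/
lemma plan_restrict {μ₁ ν₁ ν₃ : Measure X} {π : Measure (X × X)}
    (hμ₁ : GoodMeasure μ₁) (hν₁ : GoodMeasure ν₁) (hπ : π ∈ plans μ₁ ν₁) (h31 : ν₃ ≤ ν₁) :
    ∃ μ₃ : Measure X, ∃ π' : Measure (X × X), π' ∈ plans μ₃ ν₃ ∧ μ₃ ≤ μ₁ ∧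
      ∫ q, dist q.1 q.2 ∂π' ≤ ∫ q, dist q.1 q.2 ∂π := by
  have : IsFiniteMeasure μ₁ := good_finite hμ₁
  have : IsFiniteMeasure ν₁ := good_finite hν₁
  have : IsFiniteMeasure ν₃ := isFiniteMeasure_of_le ν₁ h31
  have : IsFiniteMeasure π := plan_finite hπ
  have hac : ν₃ ≪ ν₁ := Measure.absolutelyContinuous_of_le h31
  set g := ν₃.rnDeriv ν₁ with hg
  have hgm : Measurable g := ν₃.measurable_rnDeriv ν₁
  set π' := π.withDensity (fun q => g q.2) with hπ'
  have hle : π' ≤ π := by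
    have h1 : (fun q : X × X => g q.2) ≤ᵐ[π] fun _ => 1 := by
      have hgle : g ≤ᵐ[ν₁] 1 := Measure.rnDeriv_le_one_of_le h31
      rw [Filter.EventuallyLE, ae_iff] at hgle ⊢
      have hset : {q : X × X | ¬ g q.2 ≤ 1} = Prod.snd ⁻¹' {y | ¬ g y ≤ 1} := rfl
      rw [hset, ← Measure.map_apply measurable_snd, hπ.2]
      · exact hgle
      · exact (measurableSet_le hgm measurable_const).compl
    calc π' ≤ π.withDensity (fun _ => 1) := withDensity_mono h1
    _ = π := withDensity_one
  have hsnd : π'.map Prod.snd = ν₃ := by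
    ext s hs
    rw [Measure.map_apply measurable_snd hs, hπ', withDensity_apply _ (measurable_snd hs)]
    have : ∫⁻ q in Prod.snd ⁻¹' s, g q.2 ∂π = ∫⁻ y in s, g y ∂(π.map Prod.snd) :=
      (setLIntegral_map hs hgm measurable_snd).symm
    rw [this, hπ.2, ← withDensity_apply _ hs, Measure.withDensity_rnDeriv_eq ν₃ ν₁ hac]
  exact ⟨π'.map Prod.fst, π', ⟨rfl, hsnd⟩,
    hπ.1 ▸ Measure.map_mono hle measurable_fst,
    cost_mono hle (plan_dist_integrable hπ hμ₁ hν₁)⟩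
end G

section I
variable {X : Type} [PseudoMetricSpace X] [MeasurableSpace X] [OpensMeasurableSpace X]
  [SecondCountableTopology X] [Nonempty X]
variable {μ ν : Measure X} {π : Measure (X × X)}

lemma plan_swap (h : π ∈ plans μ ν) :
    π.map Prod.swap ∈ plans ν μ ∧
      ∫ q, dist q.1 q.2 ∂(π.map Prod.swap) = ∫ q, dist q.1 q.2 ∂π := by
  refine ⟨⟨?_, ?_⟩, ?_⟩
  · rw [Measure.map_map measurable_fst measurable_swap]
    exact h.2
  · rw [Measure.map_map measurable_snd measurable_swap]
    exact h.1
  · rw [integral_map measurable_swap.aemeasurable dist_cont.aestronglyMeasurable]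
    exact integral_congr_ae (Eventually.of_forall fun q => dist_comm q.2 q.1)

lemma Wass_symm (μ ν : Measure X) : Wass μ ν = Wass ν μ := by
  have hsub : ∀ a b : Measure X,
      {r : ℝ | ∃ π ∈ plans a b, r = ∫ q, dist q.1 q.2 ∂π} ⊆
      {r : ℝ | ∃ π ∈ plans b a, r = ∫ q, dist q.1 q.2 ∂π} := by
    rintro a b r ⟨π, hπ, rfl⟩
    obtain ⟨hmem, hcost⟩ := plan_swap hπ
    exact ⟨π.map Prod.swap, hmem, hcost.symm⟩
  unfold Wass
  congr 1
  exact le_antisymm (hsub μ ν) (hsub ν μ)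

lemma GWass_symm (μ ν : Measure X) : GWass μ ν = GWass ν μ := by
  have hsub : ∀ a b : Measure X,
      {r : ℝ | ∃ μ' ν' : Measure X, GoodMeasure μ' ∧ GoodMeasure ν' ∧ mass μ' = mass ν' ∧
        r = tv a μ' + tv b ν' + Wass μ' ν'} ⊆
      {r : ℝ | ∃ μ' ν' : Measure X, GoodMeasure μ' ∧ GoodMeasure ν' ∧ mass μ' = mass ν' ∧
        r = tv b μ' + tv a ν' + Wass μ' ν'} := by
    rintro a b r ⟨μ', ν', h1, h2, h3, rfl⟩
    exact ⟨ν', μ', h2, h1, h3.symm, by rw [Wass_symm ν' μ']; ring⟩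
  unfold GWass
  congr 1
  exact le_antisymm (hsub μ ν) (hsub ν μ)
end I

section H
variable {X : Type} [MetricSpace X] [MeasurableSpace X] [BorelSpace X]
  [SecondCountableTopology X] [Nonempty X] [StandardBorelSpace X]

lemma glue {α β γ : Measure X} {π₁ π₂ : Measure (X × X)}
    (hα : GoodMeasure α) (hβ : GoodMeasure β) (hγ : GoodMeasure γ)
    (h₁ : π₁ ∈ plans α β) (h₂ : π₂ ∈ plans β γ) :
    ∃ π ∈ plans α γ, ∫ q, dist q.1 q.2 ∂π ≤ ∫ q, dist q.1 q.2 ∂π₁ + ∫ q, dist q.1 q.2 ∂π₂ := by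
  have : IsFiniteMeasure α := good_finite hα
  have : IsFiniteMeasure β := good_finite hβ
  have : IsFiniteMeasure π₁ := plan_finite h₁
  have : IsFiniteMeasure π₂ := plan_finite h₂
  set κ := π₂.condKernel with hκ
  set η := κ.comap (Prod.snd : X × X → X) measurable_snd with hη
  set G := π₁.compProd η with hG
  have e_meas : Measurable (fun p : (X × X) × X => (p.1.1, p.2)) :=
    (measurable_fst.comp measurable_fst).prodMk measurable_snd
  have T_meas : Measurable (fun p : (X × X) × X => (p.1.2, p.2)) :=
    (measurable_snd.comp measurable_fst).prodMk measurable_snd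
  -- first projection of G is π₁
  have key1 : G.map Prod.fst = π₁ := Measure.fst_compProd π₁ η
  -- the (1.2, 2) projection of G is π₂
  have key2 : G.map (fun p => (p.1.2, p.2)) = π₂ := by
    have hfst : π₂.fst = β := h₂.1
    ext s hs
    rw [Measure.map_apply T_meas hs, hG,
      Measure.compProd_apply ((T_meas hs))]
    have hint : ∀ q : X × X, η q (Prod.mk q ⁻¹' ((fun p : (X × X) × X => (p.1.2, p.2)) ⁻¹' s))
        = κ q.2 (Prod.mk q.2 ⁻¹' s) := by
      intro q
      rw [hη, Kernel.comap_apply]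
      rfl
    simp_rw [hint]
    have hFm : Measurable (fun y : X => κ y (Prod.mk y ⁻¹' s)) :=
      Kernel.measurable_kernel_prodMk_left hs
    have hswap : ∫⁻ q : X × X, κ q.2 (Prod.mk q.2 ⁻¹' s) ∂π₁
        = ∫⁻ y, κ y (Prod.mk y ⁻¹' s) ∂(π₁.map Prod.snd) :=
      (lintegral_map hFm measurable_snd).symm
    rw [hswap, h₁.2, ← hfst, ← Measure.compProd_apply hs, Measure.disintegrate π₂ κ]
  set π := G.map (fun p => (p.1.1, p.2)) with hπdef
  have hπ : π ∈ plans α γ := by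
    constructor
    · rw [hπdef, Measure.map_map measurable_fst e_meas]
      have : (Prod.fst ∘ fun p : (X × X) × X => (p.1.1, p.2)) =
          (Prod.fst ∘ Prod.fst) := rfl
      rw [this, ← Measure.map_map measurable_fst measurable_fst, key1, h₁.1]
    · rw [hπdef, Measure.map_map measurable_snd e_meas]
      have : (Prod.snd ∘ fun p : (X × X) × X => (p.1.1, p.2)) =
          (Prod.snd ∘ fun p : (X × X) × X => (p.1.2, p.2)) := rfl
      rw [this, ← Measure.map_map measurable_snd T_meas, key2, h₂.2]
  refine ⟨π, hπ, ?_⟩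
  have i1 : Integrable (fun p : (X × X) × X => dist p.1.1 p.1.2) G := by
    have := plan_dist_integrable h₁ hα hβ
    rw [← key1] at this
    exact (integrable_map_measure dist_cont.aestronglyMeasurable
      measurable_fst.aemeasurable).mp this
  have i2 : Integrable (fun p : (X × X) × X => dist p.1.2 p.2) G := by
    have := plan_dist_integrable h₂ hβ hγ
    rw [← key2] at this
    exact (integrable_map_measure dist_cont.aestronglyMeasurable
      T_meas.aemeasurable).mp this
  have i0 : Integrable (fun p : (X × X) × X => dist p.1.1 p.2) G := by
    have := plan_dist_integrable hπ hα hγ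
    rw [hπdef] at this
    exact (integrable_map_measure dist_cont.aestronglyMeasurable
      e_meas.aemeasurable).mp this
  have c0 : ∫ q, dist q.1 q.2 ∂π = ∫ p : (X × X) × X, dist p.1.1 p.2 ∂G := by
    rw [hπdef]
    exact integral_map e_meas.aemeasurable dist_cont.aestronglyMeasurable
  have c1 : ∫ q, dist q.1 q.2 ∂π₁ = ∫ p : (X × X) × X, dist p.1.1 p.1.2 ∂G := by
    rw [← key1]
    exact integral_map measurable_fst.aemeasurable dist_cont.aestronglyMeasurable
  have c2 : ∫ q, dist q.1 q.2 ∂π₂ = ∫ p : (X × X) × X, dist p.1.2 p.2 ∂G := by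
    rw [← key2]
    exact integral_map T_meas.aemeasurable dist_cont.aestronglyMeasurable
  rw [c0, c1, c2, ← integral_add i1 i2]
  exact integral_mono i0 (i1.add i2) (fun p => dist_triangle p.1.1 p.1.2 p.2)
end H

section E
variable {X : Type} [PseudoMetricSpace X] [MeasurableSpace X] [OpensMeasurableSpace X]
  [BorelSpace X] {μ ν : Measure X}

lemma lip_aux {F : Set X} (n : ℕ) : LipschitzWith 1 (fun x => max (((n:ℝ)+1)⁻¹ - infDist x F) 0) := by
  rw [lipschitzWith_iff_dist_le_mul]
  intro x y
  rw [NNReal.coe_one, one_mul, Real.dist_eq]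
  have h1 : |max (((n:ℝ)+1)⁻¹ - infDist x F) 0 - max (((n:ℝ)+1)⁻¹ - infDist y F) 0|
      ≤ |(((n:ℝ)+1)⁻¹ - infDist x F) - (((n:ℝ)+1)⁻¹ - infDist y F)| :=
    abs_max_sub_max_le_abs _ _ _
  have h2 : |infDist y F - infDist x F| ≤ dist x y := by
    rw [abs_le]
    constructor
    · have h3 := infDist_le_infDist_add_dist (x := x) (y := y) (s := F)
      have hc : dist y x = dist x y := dist_comm y x
      linarith
    · have h3 := infDist_le_infDist_add_dist (x := y) (y := x) (s := F)
      have hc : dist y x = dist x y := dist_comm y x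
      linarith
  calc _ ≤ _ := h1
  _ = |infDist y F - infDist x F| := by ring_nf
  _ ≤ dist x y := h2

lemma measure_eq_of_lip_integral_eq [IsFiniteMeasure μ] [IsFiniteMeasure ν]
    (h : ∀ f : X → ℝ, LipschitzWith 1 f → (∀ x, |f x| ≤ 1) → ∫ x, f x ∂μ = ∫ x, f x ∂ν) :
    μ = ν := by
  have hclosed : ∀ F : Set X, IsClosed F → μ F = ν F := by
    intro F hF
    rcases F.eq_empty_or_nonempty with rfl | hne
    · simp
    set g : ℕ → X → ℝ := fun n x => max (((n:ℝ)+1)⁻¹ - infDist x F) 0 with hg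
    have hgb : ∀ n x, |g n x| ≤ 1 := by
      intro n x
      rw [abs_le]
      constructor
      · simp [hg]
      · apply max_le _ zero_le_one
        have h1 : ((n:ℝ)+1)⁻¹ ≤ 1 := by
          rw [inv_le_one_iff₀]; right; linarith [Nat.cast_nonneg (α := ℝ) n]
        have := infDist_nonneg (x := x) (s := F)
        linarith
    have heq : ∀ n : ℕ, ∫ x, ((n:ℝ)+1) * g n x ∂μ = ∫ x, ((n:ℝ)+1) * g n x ∂ν := by
      intro n
      rw [integral_const_mul, integral_const_mul, h (g n) (lip_aux n) (hgb n)]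
    set h' : ℕ → X → ℝ := fun n x => ((n:ℝ)+1) * g n x with hh'
    have hpos : ∀ n : ℕ, (0:ℝ) < (n:ℝ)+1 := fun n => by positivity
    have hb : ∀ n x, ‖h' n x‖ ≤ 1 := by
      intro n x
      rw [Real.norm_eq_abs, abs_mul, abs_of_pos (hpos n)]
      rcases le_total (((n:ℝ)+1)⁻¹ - infDist x F) 0 with h0 | h0
      · simp only [hh', hg, max_eq_right h0, abs_zero, mul_zero]; norm_num
      · simp only [hh', hg, max_eq_left h0]
        rw [abs_of_nonneg h0]
        have := infDist_nonneg (x := x) (s := F)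
        calc ((n:ℝ)+1) * (((n:ℝ)+1)⁻¹ - infDist x F) ≤ ((n:ℝ)+1) * ((n:ℝ)+1)⁻¹ := by
              apply mul_le_mul_of_nonneg_left _ (hpos n).le; linarith
        _ = 1 := mul_inv_cancel₀ (hpos n).ne'
    have hlim : ∀ x, Tendsto (fun n => h' n x) atTop (nhds (F.indicator (fun _ => (1:ℝ)) x)) := by
      intro x
      by_cases hx : x ∈ F
      · have : ∀ n, h' n x = 1 := by
          intro n
          simp only [hh', hg, infDist_zero_of_mem hx, sub_zero,
            max_eq_left (inv_nonneg.mpr (hpos n).le), mul_inv_cancel₀ (hpos n).ne']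
        rw [indicator_of_mem hx]
        simp only [this]
        exact tendsto_const_nhds
      · have hd : 0 < infDist x F := by
          rcases (infDist_nonneg (x := x) (s := F)).lt_or_eq with h0 | h0
          · exact h0
          · exact absurd ((hF.mem_iff_infDist_zero hne).mpr h0.symm) hx
        rw [indicator_of_notMem hx]
        apply tendsto_const_nhds.congr'
        obtain ⟨N, hN⟩ := exists_nat_gt (infDist x F)⁻¹
        filter_upwards [eventually_ge_atTop N] with n hn
        have : ((n:ℝ)+1)⁻¹ - infDist x F ≤ 0 := by
          rw [sub_nonpos]
          rw [inv_le_comm₀ (hpos n) hd]  -- maybe wrong name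
          calc (infDist x F)⁻¹ ≤ (N:ℝ) := hN.le
          _ ≤ (n:ℝ)+1 := by
            have : (N:ℝ) ≤ (n:ℝ) := Nat.cast_le.mpr hn
            linarith
        simp [hh', hg, max_eq_right this]
    have hcont : ∀ n, AEStronglyMeasurable (h' n) μ ∧ AEStronglyMeasurable (h' n) ν := by
      intro n
      have : Continuous (h' n) := continuous_const.mul ((lip_aux (F := F) n).continuous)
      exact ⟨this.aestronglyMeasurable, this.aestronglyMeasurable⟩
    have t1 : Tendsto (fun n => ∫ x, h' n x ∂μ) atTop (nhds (∫ x, F.indicator (fun _ => (1:ℝ)) x ∂μ)) := by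
      apply tendsto_integral_of_dominated_convergence (fun _ => (1:ℝ))
        (fun n => (hcont n).1) (integrable_const 1)
        (fun n => Eventually.of_forall (hb n)) (Eventually.of_forall hlim)
    have t2 : Tendsto (fun n => ∫ x, h' n x ∂ν) atTop (nhds (∫ x, F.indicator (fun _ => (1:ℝ)) x ∂ν)) := by
      apply tendsto_integral_of_dominated_convergence (fun _ => (1:ℝ))
        (fun n => (hcont n).2) (integrable_const 1)
        (fun n => Eventually.of_forall (hb n)) (Eventually.of_forall hlim)
    have hind : ∫ x, F.indicator (fun _ => (1:ℝ)) x ∂μ = ∫ x, F.indicator (fun _ => (1:ℝ)) x ∂ν := by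
      exact tendsto_nhds_unique (t1.congr (fun n => heq n)) t2
    rw [integral_indicator hF.measurableSet, integral_indicator hF.measurableSet] at hind
    simp only [integral_const, smul_eq_mul, mul_one, Measure.restrict_apply_univ] at hind
    exact (ENNReal.toReal_eq_toReal_iff' (measure_ne_top μ F) (measure_ne_top ν F)).mp (by simpa [Measure.real] using hind)
  apply ext_of_generate_finite {s : Set X | IsClosed s}
    (BorelSpace.measurable_eq (α := X) |>.trans borel_eq_generateFrom_isClosed)
    isPiSystem_isClosed (fun s hs => hclosed s hs) (hclosed univ isClosed_univ)
end E

section D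
variable {X : Type} [PseudoMetricSpace X] [MeasurableSpace X] [OpensMeasurableSpace X]
  [SecondCountableTopology X] [Nonempty X]
variable {μ ν : Measure X} {π : Measure (X × X)}

lemma good_zero : GoodMeasure (0 : Measure X) := by
  constructor
  · simp
  · have : msupp (0 : Measure X) = ∅ := by
      ext x
      simp [msupp]
      exact ⟨univ, univ_mem⟩
    rw [this]
    exact Bornology.isBounded_empty

lemma mass_eq_univ {μ ν : Measure X} (hμ : GoodMeasure μ) (hν : GoodMeasure ν)
    (h : mass μ = mass ν) : μ Set.univ = ν Set.univ :=
  (ENNReal.toReal_eq_toReal_iff' hμ.1 hν.1).mp h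

lemma gwassSet_nonempty (μ ν : Measure X) :
    {r : ℝ | ∃ μ' ν' : Measure X, GoodMeasure μ' ∧ GoodMeasure ν' ∧ mass μ' = mass ν' ∧
      r = tv μ μ' + tv ν ν' + Wass μ' ν'}.Nonempty :=
  ⟨_, 0, 0, good_zero, good_zero, rfl, rfl⟩

lemma GWass_nonneg (hμ : GoodMeasure μ) (hν : GoodMeasure ν) : 0 ≤ GWass μ ν := by
  apply Real.sInf_nonneg
  rintro r ⟨μ', ν', hμ', hν', hm, rfl⟩
  have := good_finite hμ; have := good_finite hν
  have := good_finite hμ'; have := good_finite hν'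
  have := tv_nonneg (μ := μ) (ν := μ')
  have := tv_nonneg (μ := ν) (ν := ν')
  have := Wass_nonneg μ' ν'
  linarith

lemma gwassSet_bddBelow (hμ : GoodMeasure μ) (hν : GoodMeasure ν) :
    BddBelow {r : ℝ | ∃ μ' ν' : Measure X, GoodMeasure μ' ∧ GoodMeasure ν' ∧
      mass μ' = mass ν' ∧ r = tv μ μ' + tv ν ν' + Wass μ' ν'} := by
  refine ⟨0, ?_⟩
  rintro r ⟨μ', ν', hμ', hν', hm, rfl⟩
  have := good_finite hμ; have := good_finite hν
  have := good_finite hμ'; have := good_finite hν'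
  have := tv_nonneg (μ := μ) (ν := μ')
  have := tv_nonneg (μ := ν) (ν := ν')
  have := Wass_nonneg μ' ν'
  linarith

/-- the key Kantorovich-type lower bound for a single plan -/
lemma lip_diff_le_cost (hμ : GoodMeasure μ) (hν : GoodMeasure ν) (hπ : π ∈ plans μ ν)
    {f : X → ℝ} (hf : LipschitzWith 1 f) (hb : ∀ x, |f x| ≤ 1) :
    ∫ x, f x ∂μ - ∫ x, f x ∂ν ≤ ∫ q, dist q.1 q.2 ∂π := by
  have : IsFiniteMeasure μ := good_finite hμ
  have : IsFiniteMeasure π := plan_finite hπ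
  have hfc : Continuous f := hf.continuous
  have i1 : Integrable (fun q : X × X => f q.1) π :=
    bdd_integrable ((hfc.comp continuous_fst).aestronglyMeasurable) (fun q => hb q.1)
  have i2 : Integrable (fun q : X × X => f q.2) π :=
    bdd_integrable ((hfc.comp continuous_snd).aestronglyMeasurable) (fun q => hb q.2)
  have e1 : ∫ x, f x ∂μ = ∫ q : X × X, f q.1 ∂π := by
    rw [← hπ.1, integral_map measurable_fst.aemeasurable]
    rw [hπ.1]; exact hfc.aestronglyMeasurable
  have e2 : ∫ x, f x ∂ν = ∫ q : X × X, f q.2 ∂π := by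
    rw [← hπ.2, integral_map measurable_snd.aemeasurable]
    rw [hπ.2]; exact hfc.aestronglyMeasurable
  rw [e1, e2, ← integral_sub i1 i2]
  apply integral_mono (i1.sub i2) (plan_dist_integrable hπ hμ hν)
  intro q
  have := hf.dist_le_mul q.1 q.2
  rw [NNReal.coe_one, one_mul, Real.dist_eq] at this
  have := abs_le.mp this
  simpa using this.2

lemma integral_diff_le_GWass [BorelSpace X] (hμ : GoodMeasure μ) (hν : GoodMeasure ν)
    {f : X → ℝ} (hf : LipschitzWith 1 f) (hb : ∀ x, |f x| ≤ 1) :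
    ∫ x, f x ∂μ - ∫ x, f x ∂ν ≤ GWass μ ν := by
  have : IsFiniteMeasure μ := good_finite hμ
  have : IsFiniteMeasure ν := good_finite hν
  apply le_csInf (gwassSet_nonempty μ ν)
  rintro r ⟨μ', ν', hμ', hν', hm, rfl⟩
  have : IsFiniteMeasure μ' := good_finite hμ'
  have : IsFiniteMeasure ν' := good_finite hν'
  have hfm : Measurable f := hf.continuous.measurable
  have h1 : ∫ x, f x ∂μ - ∫ x, f x ∂μ' ≤ tv μ μ' := integral_diff_le_tv hfm hb
  have h3 : ∫ x, f x ∂ν' - ∫ x, f x ∂ν ≤ tv ν ν' := by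
    have := integral_diff_le_tv (μ := ν') (ν := ν) (f := f) hfm hb
    have htv : tv ν' ν = tv ν ν' := by unfold tv; rw [inf_comm]; ring
    rw [htv] at this
    linarith
  have h2 : ∫ x, f x ∂μ' - ∫ x, f x ∂ν' ≤ Wass μ' ν' := by
    apply le_csInf
    · obtain ⟨π, hπ⟩ := plans_nonempty hμ'.1 (mass_eq_univ hμ' hν' hm)
      exact ⟨_, π, hπ, rfl⟩
    · rintro r ⟨π, hπ, rfl⟩
      exact lip_diff_le_cost hμ' hν' hπ hf hb
  linarith

end D


/-- `W^g` is a distance on `𝓜(ℝ^d)`: nonnegative, symmetric, vanishing exactly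
on pairs of equal measures, and satisfying the triangle inequality. -/
theorem generalized_wasserstein_is_distance {d : ℕ} :
    (∀ μ ν : Measure (Euc d), GoodMeasure μ → GoodMeasure ν → 0 ≤ GWass μ ν) ∧
    (∀ μ ν : Measure (Euc d), GoodMeasure μ → GoodMeasure ν → GWass μ ν = GWass ν μ) ∧
    (∀ μ ν : Measure (Euc d), GoodMeasure μ → GoodMeasure ν → (GWass μ ν = 0 ↔ μ = ν)) ∧
    (∀ μ ν ρ : Measure (Euc d), GoodMeasure μ → GoodMeasure ν → GoodMeasure ρ →
      GWass μ ρ ≤ GWass μ ν + GWass ν ρ) := by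
  refine ⟨fun μ ν hμ hν => GWass_nonneg hμ hν, fun μ ν _ _ => GWass_symm μ ν, ?_, ?_⟩
  · intro μ ν hμ hν
    constructor
    · intro h0
      have : IsFiniteMeasure μ := good_finite hμ
      have : IsFiniteMeasure ν := good_finite hν
      apply measure_eq_of_lip_integral_eq
      intro f hf hb
      have h1 := integral_diff_le_GWass hμ hν hf hb
      have h2 := integral_diff_le_GWass hν hμ hf hb
      rw [GWass_symm ν μ, h0] at h2
      rw [h0] at h1
      linarith
    · rintro rfl
      refine le_antisymm ?_ (GWass_nonneg hμ hμ)
      have hle : GWass μ μ ≤ tv μ μ + tv μ μ + Wass μ μ :=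
        csInf_le (gwassSet_bddBelow hμ hμ) ⟨μ, μ, hμ, hμ, rfl, rfl⟩
      rw [tv_self, Wass_self] at hle
      linarith
  · intro μ ν ρ hμ hν hρ
    have : IsFiniteMeasure μ := good_finite hμ
    have : IsFiniteMeasure ν := good_finite hν
    have : IsFiniteMeasure ρ := good_finite hρ
    apply le_of_forall_pos_le_add
    intro ε hε
    have hε4 : (0:ℝ) < ε/4 := by linarith
    obtain ⟨r1, ⟨μ₁, ν₁, hμ₁, hν₁, hm1, rfl⟩, hr1⟩ :=
      exists_lt_of_csInf_lt (gwassSet_nonempty μ ν)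
        (show GWass μ ν < GWass μ ν + ε/4 by linarith)
    obtain ⟨r2, ⟨ν₂, ρ₂, hν₂, hρ₂, hm2, rfl⟩, hr2⟩ :=
      exists_lt_of_csInf_lt (gwassSet_nonempty ν ρ)
        (show GWass ν ρ < GWass ν ρ + ε/4 by linarith)
    have : IsFiniteMeasure μ₁ := good_finite hμ₁
    have : IsFiniteMeasure ν₁ := good_finite hν₁
    have : IsFiniteMeasure ν₂ := good_finite hν₂
    have : IsFiniteMeasure ρ₂ := good_finite hρ₂
    obtain ⟨π₁, hπ₁mem, hπ₁cost⟩ := exists_plan_cost_lt hμ₁ (mass_eq_univ hμ₁ hν₁ hm1) hε4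
    obtain ⟨π₂, hπ₂mem, hπ₂cost⟩ := exists_plan_cost_lt hν₂ (mass_eq_univ hν₂ hρ₂ hm2) hε4
    set ν₃ := ν₁ ⊓ ν₂ with hν₃def
    have h3le1 : ν₃ ≤ ν₁ := inf_le_left
    have h3le2 : ν₃ ≤ ν₂ := inf_le_right
    obtain ⟨μ₃, π₁', hπ₁', hμ₃le, hc1⟩ := plan_restrict hμ₁ hν₁ hπ₁mem h3le1
    obtain ⟨hswapmem, hswapcost⟩ := plan_swap hπ₂mem
    obtain ⟨ρ₃, π₂'', hπ₂'', hρ₃le, hc2⟩ := plan_restrict hρ₂ hν₂ hswapmem h3le2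
    obtain ⟨hswap2mem, hswap2cost⟩ := plan_swap hπ₂''
    have hgμ₃ : GoodMeasure μ₃ := good_of_le hμ₃le hμ₁
    have hgν₃ : GoodMeasure ν₃ := good_of_le h3le1 hν₁
    have hgρ₃ : GoodMeasure ρ₃ := good_of_le hρ₃le hρ₂
    have : IsFiniteMeasure μ₃ := good_finite hgμ₃
    have : IsFiniteMeasure ν₃ := good_finite hgν₃
    have : IsFiniteMeasure ρ₃ := good_finite hgρ₃
    obtain ⟨π, hπmem, hπcost⟩ := glue hgμ₃ hgν₃ hgρ₃ hπ₁' hswap2mem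
    have hm3 : mass μ₃ = mass ρ₃ := plan_mass hπmem
    have hmain : GWass μ ρ ≤ tv μ μ₃ + tv ρ ρ₃ + Wass μ₃ ρ₃ :=
      csInf_le (gwassSet_bddBelow hμ hρ) ⟨μ₃, ρ₃, hgμ₃, hgρ₃, hm3, rfl⟩
    have hW : Wass μ₃ ρ₃ ≤ ∫ q, dist q.1 q.2 ∂π := Wass_le_cost hπmem
    have ma : mass μ₃ = mass ν₃ := plan_mass hπ₁'
    have mb : mass ν₃ = mass ρ₃ := plan_mass hswap2mem
    have h_tvA := tv_sub_le μ μ₁ μ₃ hμ₃le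
    have h_tvB := tv_sub_le ρ ρ₂ ρ₃ hρ₃le
    have h_two := tv_two_sided ν ν₁ ν₂
    rw [← hν₃def] at h_two
    have htvρ : tv ρ ρ₂ = tv ρ₂ ρ := by unfold tv; rw [inf_comm]; ring
    linarith [hswap2cost, hc2, hswapcost, hc1, hπcost, hπ₁cost, hπ₂cost]

end
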